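/- Let α ∈ (0,1) and define b(γ) := ∫_ℝ sgn(x)|x|^{1-α} γ(dx) for probability measures γ on ℝ with finite (1-α)-moment. Then for all such γ, γ̃: |b(γ) - b(γ̃)| ≤ 2^α · W_{1-α}(γ, γ̃), where W_κ(γ,γ̃) := inf over couplings π of γ and γ̃ of ∫∫ |x-y|^κ π(dx,dy). -/
import Mathlib


open MeasureTheory Real Set

/-- The `L^κ`-Wasserstein distance between probability measures on a normed space:
`W_κ(γ,γ̃) = inf over couplings π of ∫ ‖x-y‖^κ dπ`. -/
noncomputable def Wass {E : Type*} [MeasurableSpace E] [NormedAddCommGroup E]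
    (κ : ℝ) (γ γ' : Measure E) : ℝ :=
  sInf { r : ℝ | ∃ m : Measure (E × E), IsProbabilityMeasure m ∧
    m.map Prod.fst = γ ∧ m.map Prod.snd = γ' ∧ r = ∫ p, ‖p.1 - p.2‖ ^ κ ∂m }

lemma abs_realSign_le_one (x : ℝ) : |Real.sign x| ≤ 1 := by
  rcases lt_trichotomy x 0 with h | h | h
  · rw [Real.sign_of_neg h]; norm_num
  · rw [h, Real.sign_zero]; norm_num
  · rw [Real.sign_of_pos h]; norm_num

lemma measurable_realSign : Measurable Real.sign := by
  have : Real.sign = fun r : ℝ => if r < 0 then (-1:ℝ) else if 0 < r then 1 else 0 := by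
    funext r; rfl
  rw [this]
  exact Measurable.ite (measurableSet_lt measurable_id measurable_const) measurable_const
    (Measurable.ite (measurableSet_lt measurable_const measurable_id) measurable_const
      measurable_const)

lemma gval_nonneg {κ : ℝ} (hκ0 : 0 < κ) {x : ℝ} (hx : 0 ≤ x) :
    Real.sign x * |x| ^ κ = x ^ κ := by
  rcases hx.lt_or_eq with h | h
  · rw [Real.sign_of_pos h, abs_of_pos h, one_mul]
  · rw [← h]; simp [Real.sign_zero, Real.zero_rpow hκ0.ne']

lemma gval_nonpos {κ : ℝ} (hκ0 : 0 < κ) {x : ℝ} (hx : x ≤ 0) :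
    Real.sign x * |x| ^ κ = -((-x) ^ κ) := by
  rcases hx.eq_or_lt with h | h
  · subst h; simp [Real.sign_zero, Real.zero_rpow hκ0.ne']
  · rw [Real.sign_of_neg h, abs_of_neg h]; ring

lemma rpow_subadd {κ : ℝ} (hκ0 : 0 < κ) (hκ1 : κ ≤ 1) {a b : ℝ} (ha : 0 ≤ a) (hb : 0 ≤ b) :
    (a + b) ^ κ ≤ a ^ κ + b ^ κ := by
  rw [← Real.coe_toNNReal a ha, ← Real.coe_toNNReal b hb]
  exact_mod_cast NNReal.rpow_add_le_add_rpow a.toNNReal b.toNNReal hκ0.le hκ1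

lemma rpow_lip {κ : ℝ} (hκ0 : 0 < κ) (hκ1 : κ ≤ 1) {a b : ℝ} (ha : 0 ≤ a) (hb : 0 ≤ b) :
    |a ^ κ - b ^ κ| ≤ |a - b| ^ κ := by
  wlog hab : b ≤ a generalizing a b
  · rw [abs_sub_comm, abs_sub_comm a b]; exact this hb ha (le_of_not_ge hab)
  have h1 : a ^ κ ≤ (a - b) ^ κ + b ^ κ := by
    have := rpow_subadd hκ0 hκ1 (sub_nonneg.mpr hab) hb
    simpa using this
  have h2 : b ^ κ ≤ a ^ κ := Real.rpow_le_rpow hb hab hκ0.le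
  rw [abs_of_nonneg (sub_nonneg.mpr h2), abs_of_nonneg (sub_nonneg.mpr hab)]
  linarith

lemma rpow_concave_two {κ : ℝ} (hκ0 : 0 < κ) (hκ1 : κ ≤ 1) {a b : ℝ} (ha : 0 ≤ a) (hb : 0 ≤ b) :
    a ^ κ + b ^ κ ≤ 2 ^ (1 - κ) * (a + b) ^ κ := by
  have h := (Real.concaveOn_rpow hκ0.le hκ1).2 (mem_Ici.2 ha) (mem_Ici.2 hb)
    (by norm_num : (0:ℝ) ≤ 1/2) (by norm_num : (0:ℝ) ≤ 1/2) (by norm_num)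
  simp only [smul_eq_mul] at h
  have h2 : (1/2 : ℝ) * a + (1/2) * b = (a + b) / 2 := by ring
  have h3 : ((a + b) / 2) ^ κ = (a + b) ^ κ / 2 ^ κ :=
    Real.div_rpow (by linarith) (by norm_num : (0:ℝ) ≤ 2) κ
  have h4 : (2:ℝ) ^ (1 - κ) = 2 / 2 ^ κ := by
    rw [Real.rpow_sub (by norm_num), Real.rpow_one]
  have h5 : (0:ℝ) < 2 ^ κ := Real.rpow_pos_of_pos (by norm_num) κ
  rw [h2, h3] at h
  rw [h4]
  calc a ^ κ + b ^ κ = 2 * ((1/2) * a ^ κ + (1/2) * b ^ κ) := by ring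
    _ ≤ 2 * ((a + b) ^ κ / 2 ^ κ) := by linarith
    _ = 2 / 2 ^ κ * (a + b) ^ κ := by ring

lemma key_mixed {κ : ℝ} (hκ0 : 0 < κ) (hκ1 : κ ≤ 1) {x y : ℝ} (hx : 0 ≤ x) (hy : y < 0) :
    |Real.sign x * |x| ^ κ - Real.sign y * |y| ^ κ| ≤ 2 ^ (1 - κ) * |x - y| ^ κ := by
  rw [gval_nonneg hκ0 hx, gval_nonpos hκ0 hy.le, sub_neg_eq_add]
  have hxk : 0 ≤ x ^ κ := Real.rpow_nonneg hx κ
  have hyk : 0 ≤ (-y) ^ κ := Real.rpow_nonneg (by linarith) κ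
  rw [abs_of_nonneg (by linarith)]
  have h := rpow_concave_two hκ0 hκ1 hx (by linarith : (0:ℝ) ≤ -y)
  have habs : |x - y| = x + -y := by rw [abs_of_nonneg (by linarith)]; ring
  rw [habs]
  exact h

lemma key_ineq {κ : ℝ} (hκ0 : 0 < κ) (hκ1 : κ ≤ 1) (x y : ℝ) :
    |Real.sign x * |x| ^ κ - Real.sign y * |y| ^ κ| ≤ 2 ^ (1 - κ) * |x - y| ^ κ := by
  have hone : (1:ℝ) ≤ 2 ^ (1 - κ) :=
    Real.one_le_rpow (by norm_num) (by linarith)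
  rcases le_or_gt 0 x with hx | hx <;> rcases le_or_gt 0 y with hy | hy
  · rw [gval_nonneg hκ0 hx, gval_nonneg hκ0 hy]
    have h1 : |x ^ κ - y ^ κ| ≤ |x - y| ^ κ := rpow_lip hκ0 hκ1 hx hy
    have h2 : |x - y| ^ κ ≤ 2 ^ (1 - κ) * |x - y| ^ κ :=
      le_mul_of_one_le_left (Real.rpow_nonneg (abs_nonneg _) κ) hone
    linarith
  · exact key_mixed hκ0 hκ1 hx hy
  · rw [abs_sub_comm, abs_sub_comm x y]; exact key_mixed hκ0 hκ1 hy hx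
  · rw [gval_nonpos hκ0 hx.le, gval_nonpos hκ0 hy.le]
    have h0 : -((-x) ^ κ) - -((-y) ^ κ) = (-y) ^ κ - (-x) ^ κ := by ring
    rw [h0]
    have h1 : |(-y) ^ κ - (-x) ^ κ| ≤ |(-y) - (-x)| ^ κ :=
      rpow_lip hκ0 hκ1 (by linarith) (by linarith)
    have h2 : (-y) - (-x) = x - y := by ring
    rw [h2] at h1
    have h3 : |x - y| ^ κ ≤ 2 ^ (1 - κ) * |x - y| ^ κ :=
      le_mul_of_one_le_left (Real.rpow_nonneg (abs_nonneg _) κ) hone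
    linarith

/-- For `α ∈ (0,1)` and `b(γ) = ∫ sgn(x)|x|^{1-α} γ(dx)`, one has
`|b(γ) - b(γ̃)| ≤ 2^α · W_{1-α}(γ,γ̃)` for probability measures with finite `(1-α)`-moment. -/
theorem stmt3 (α : ℝ) (hα : α ∈ Set.Ioo (0:ℝ) 1)
    (γ γ' : Measure ℝ) [IsProbabilityMeasure γ] [IsProbabilityMeasure γ']
    (hγ : Integrable (fun x => |x| ^ (1 - α)) γ)
    (hγ' : Integrable (fun x => |x| ^ (1 - α)) γ') :
    |(∫ x, Real.sign x * |x| ^ (1 - α) ∂γ) - ∫ x, Real.sign x * |x| ^ (1 - α) ∂γ'|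
      ≤ (2:ℝ) ^ α * Wass (1 - α) γ γ' := by
  obtain ⟨hα0, hα1⟩ := hα
  set κ : ℝ := 1 - α with hκdef
  have hκ0 : 0 < κ := by rw [hκdef]; linarith
  have hκ1 : κ ≤ 1 := by rw [hκdef]; linarith
  have hCeq : (2:ℝ) ^ α = 2 ^ (1 - κ) := by rw [hκdef]; ring_nf
  have hCpos : (0:ℝ) < 2 ^ α := Real.rpow_pos_of_pos (by norm_num) α
  set f : ℝ → ℝ := fun x => Real.sign x * |x| ^ κ with hf
  have hpm : Measurable fun x : ℝ => |x| ^ κ :=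
    ((Real.continuous_rpow_const hκ0.le).comp continuous_abs).measurable
  have hfm : Measurable f := measurable_realSign.mul hpm
  have hfint : ∀ (μ : Measure ℝ), Integrable (fun x => |x| ^ κ) μ → Integrable f μ := by
    intro μ hμ
    refine hμ.mono hfm.aestronglyMeasurable (ae_of_all _ fun x => ?_)
    simp only [hf, Real.norm_eq_abs, abs_mul, abs_abs]
    rw [abs_of_nonneg (Real.rpow_nonneg (abs_nonneg x) κ)]
    calc |Real.sign x| * |x| ^ κ ≤ 1 * |x| ^ κ :=
          mul_le_mul_of_nonneg_right (abs_realSign_le_one x)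
            (Real.rpow_nonneg (abs_nonneg x) κ)
      _ = |x| ^ κ := one_mul _
  have hintγ : Integrable f γ := hfint γ hγ
  have hintγ' : Integrable f γ' := hfint γ' hγ'
  suffices h : |(∫ x, f x ∂γ) - ∫ x, f x ∂γ'| / 2 ^ α ≤ Wass κ γ γ' by
    have h2 := (div_le_iff₀ hCpos).mp h
    calc |(∫ x, f x ∂γ) - ∫ x, f x ∂γ'| ≤ Wass κ γ γ' * 2 ^ α := h2
      _ = 2 ^ α * Wass κ γ γ' := mul_comm _ _
  apply le_csInf
  · refine ⟨∫ p, ‖p.1 - p.2‖ ^ κ ∂(γ.prod γ'), γ.prod γ', inferInstance, ?_, ?_, rfl⟩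
    · rw [Measure.map_fst_prod]; simp
    · rw [Measure.map_snd_prod]; simp
  · rintro r ⟨m, hm, hm1, hm2, rfl⟩
    rw [div_le_iff₀ hCpos]
    have hfstm : AEMeasurable Prod.fst m := measurable_fst.aemeasurable
    have hsndm : AEMeasurable Prod.snd m := measurable_snd.aemeasurable
    have hint1 : Integrable (fun p : ℝ × ℝ => f p.1) m := by
      have h0 : Integrable f (m.map Prod.fst) := hm1 ▸ hintγ
      exact (integrable_map_measure hfm.aestronglyMeasurable hfstm).mp h0
    have hint2 : Integrable (fun p : ℝ × ℝ => f p.2) m := by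
      have h0 : Integrable f (m.map Prod.snd) := hm2 ▸ hintγ'
      exact (integrable_map_measure hfm.aestronglyMeasurable hsndm).mp h0
    have hintp1 : Integrable (fun p : ℝ × ℝ => |p.1| ^ κ) m := by
      have h0 : Integrable (fun x => |x| ^ κ) (m.map Prod.fst) := hm1 ▸ hγ
      exact (integrable_map_measure hpm.aestronglyMeasurable hfstm).mp h0
    have hintp2 : Integrable (fun p : ℝ × ℝ => |p.2| ^ κ) m := by
      have h0 : Integrable (fun x => |x| ^ κ) (m.map Prod.snd) := hm2 ▸ hγ'
      exact (integrable_map_measure hpm.aestronglyMeasurable hsndm).mp h0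
    have hd_meas : Measurable fun p : ℝ × ℝ => |p.1 - p.2| ^ κ :=
      hpm.comp (measurable_fst.sub measurable_snd)
    have hsum : Integrable (fun p : ℝ × ℝ => |p.1| ^ κ + |p.2| ^ κ) m := hintp1.add hintp2
    have hd_int : Integrable (fun p : ℝ × ℝ => |p.1 - p.2| ^ κ) m := by
      refine hsum.mono hd_meas.aestronglyMeasurable (ae_of_all _ fun p => ?_)
      rw [Real.norm_eq_abs, Real.norm_eq_abs, abs_of_nonneg (Real.rpow_nonneg (abs_nonneg _) κ),
        abs_of_nonneg (by positivity : (0:ℝ) ≤ |p.1| ^ κ + |p.2| ^ κ)]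
      calc |p.1 - p.2| ^ κ ≤ (|p.1| + |p.2|) ^ κ :=
            Real.rpow_le_rpow (abs_nonneg _) (abs_sub p.1 p.2) hκ0.le
        _ ≤ |p.1| ^ κ + |p.2| ^ κ := rpow_subadd hκ0 hκ1 (abs_nonneg _) (abs_nonneg _)
    have e1 : ∫ x, f x ∂γ = ∫ p, f p.1 ∂m := by
      rw [← hm1, integral_map hfstm hfm.aestronglyMeasurable]
    have e2 : ∫ x, f x ∂γ' = ∫ p, f p.2 ∂m := by
      rw [← hm2, integral_map hsndm hfm.aestronglyMeasurable]
    calc |(∫ x, f x ∂γ) - ∫ x, f x ∂γ'| = |∫ p, (f p.1 - f p.2) ∂m| := by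
          rw [e1, e2, integral_sub hint1 hint2]
      _ ≤ ∫ p, |f p.1 - f p.2| ∂m := by
          simpa [Real.norm_eq_abs] using
            norm_integral_le_integral_norm (μ := m) (fun p : ℝ × ℝ => f p.1 - f p.2)
      _ ≤ ∫ p, 2 ^ (1 - κ) * |p.1 - p.2| ^ κ ∂m := by
          have hdiff : Integrable (fun p : ℝ × ℝ => |f p.1 - f p.2|) m := (hint1.sub hint2).abs
          have hrhs : Integrable (fun p : ℝ × ℝ => 2 ^ (1 - κ) * |p.1 - p.2| ^ κ) m :=
            hd_int.const_mul _
          exact integral_mono hdiff hrhs fun p => key_ineq hκ0 hκ1 p.1 p.2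
      _ = 2 ^ (1 - κ) * ∫ p, |p.1 - p.2| ^ κ ∂m := integral_const_mul _ _
      _ = (∫ p, ‖p.1 - p.2‖ ^ κ ∂m) * 2 ^ α := by
          rw [hCeq]; simp only [Real.norm_eq_abs]; ring
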